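/- arXiv:2404.12201 — 2 statements merged into one kernel-verified Lean document; each statement's English description precedes it below -/
import Mathlib

section
/- Let A₁ = ℕ ∩ ⋃_{n∈ℕ} [4^n, (2 - 1/n)·4^n), A₂ = ℕ ∩ ⋃_{n∈ℕ} [(2 + 1/n)·4^n, 4^{n+1}), and A' = (A₁ \ 4ℕ) ∪ (A₂ \ (4ℕ+2)). Then the natural density of A' equals 3/4 and there is no infinite set B ⊆ ℕ with B + B ⊆ A'. -/
open Filter
open scoped Classical

noncomputable def countIn (A : Set ℕ) (N : ℕ) : ℕ :=
  ((Finset.Icc 1 N).filter (fun n => n ∈ A)).card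

noncomputable def upperDensity (A : Set ℕ) : ℝ :=
  limsup (fun N => (countIn A N : ℝ) / N) atTop

noncomputable def lowerDensity (A : Set ℕ) : ℝ :=
  liminf (fun N => (countIn A N : ℝ) / N) atTop

def hasDensity (A : Set ℕ) (d : ℝ) : Prop :=
  Tendsto (fun N => (countIn A N : ℝ) / N) atTop (nhds d)

section Aux
open Finset



lemma count_mod_eq (a b r : ℕ) (hr : r < 4) :
    ((Finset.Ico a b).filter (fun m => m % 4 = r)).card
      = (b - r + 3) / 4 - (a - r + 3) / 4 := by
  have himg : ((Finset.Ico a b).filter (fun m => m % 4 = r))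
      = (Finset.Ico ((a - r + 3) / 4) ((b - r + 3) / 4)).image (fun q => 4 * q + r) := by
    ext m
    simp only [Finset.mem_filter, Finset.mem_image, Finset.mem_Ico]
    constructor
    · rintro ⟨⟨h1, h2⟩, h3⟩
      exact ⟨(m - r) / 4, by omega, by omega⟩
    · rintro ⟨q, ⟨h1, h2⟩, rfl⟩
      omega
  rw [himg, Finset.card_image_of_injective _ (fun x y h => by omega), Nat.card_Ico]

lemma count_mod_ne (a b r : ℕ) (hr : r < 4) (hab : a ≤ b) :
    (3:ℝ)/4 * ((b:ℝ) - a) - 3 ≤ (((Finset.Ico a b).filter (fun m => ¬ m % 4 = r)).card : ℝ)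
    ∧ (((Finset.Ico a b).filter (fun m => ¬ m % 4 = r)).card : ℝ) ≤ (3:ℝ)/4 * ((b:ℝ) - a) + 3 := by
  have hsplit := Finset.card_filter_add_card_filter_not
    (s := Finset.Ico a b) (p := fun m => m % 4 = r)
  have hc := count_mod_eq a b r hr
  have hcard : (Finset.Ico a b).card = b - a := Nat.card_Ico a b
  set c := ((Finset.Ico a b).filter (fun m => ¬ m % 4 = r)).card with hcdef
  have h1 : 4 * c ≤ 3 * (b - a) + 12 := by omega
  have h2 : 3 * (b - a) ≤ 4 * c + 12 := by omega
  have hcast : ((b - a : ℕ) : ℝ) = (b:ℝ) - a := by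
    rw [Nat.cast_sub hab]
  have c1 := (Nat.cast_le (α := ℝ)).2 h1
  have c2 := (Nat.cast_le (α := ℝ)).2 h2
  push_cast at c1 c2
  rw [hcast] at c1 c2
  constructor <;> linarith



def Sfull : Set ℕ := ({m : ℕ | ∃ n : ℕ, 1 ≤ n ∧ 4 ^ n ≤ m ∧ (m : ℝ) < (2 - 1 / n) * 4 ^ n}
      \ {m : ℕ | m % 4 = 0})
    ∪ ({m : ℕ | ∃ n : ℕ, 1 ≤ n ∧ (2 + 1 / n) * 4 ^ n ≤ (m : ℝ) ∧ m < 4 ^ (n + 1)}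
      \ {m : ℕ | m % 4 = 2})

lemma mem_Sfull_iff {m : ℕ} :
    m ∈ Sfull ↔
      ((∃ n : ℕ, 1 ≤ n ∧ 4 ^ n ≤ m ∧ (m : ℝ) < (2 - 1 / n) * 4 ^ n) ∧ ¬ m % 4 = 0)
      ∨ ((∃ n : ℕ, 1 ≤ n ∧ (2 + 1 / n) * 4 ^ n ≤ (m : ℝ) ∧ m < 4 ^ (n + 1)) ∧ ¬ m % 4 = 2) := by
  simp [Sfull, Set.mem_union, Set.mem_diff, Set.mem_setOf_eq]

lemma one_div_cast_le {n : ℕ} (hn : 1 ≤ n) : (1:ℝ)/n ≤ 1 := by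
  have : (1:ℝ) ≤ n := by exact_mod_cast hn
  rw [div_le_one (by linarith)]; linarith

lemma one_div_cast_pos {n : ℕ} (hn : 1 ≤ n) : (0:ℝ) < 1/n := by
  have : (1:ℝ) ≤ n := by exact_mod_cast hn
  positivity

-- from A1 real bound: m < 2 * 4^n (nat)
lemma A1_nat_ub {m n : ℕ} (hn : 1 ≤ n) (h2 : (m : ℝ) < (2 - 1 / n) * 4 ^ n) :
    m < 2 * 4 ^ n := by
  have h := one_div_cast_pos hn
  have hlt : (m:ℝ) < 2 * 4 ^ n := by nlinarith [pow_pos (show (0:ℝ) < 4 by norm_num) n]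
  exact_mod_cast hlt

-- from A2 real bound: 2 * 4^n ≤ m (nat), in fact <
lemma A2_nat_lb {m n : ℕ} (hn : 1 ≤ n) (h1 : (2 + 1 / n) * 4 ^ n ≤ (m:ℝ)) :
    2 * 4 ^ n < m := by
  have h := one_div_cast_pos hn
  have hn4 : ((4:ℝ))^n ≥ 1 := one_le_pow₀ (by norm_num)
  have hlt : (2:ℝ) * 4 ^ n < m := by nlinarith
  exact_mod_cast hlt

lemma A1_block {m n k : ℕ} (hn : 1 ≤ n) (h1 : 4 ^ n ≤ m) (h2 : (m : ℝ) < (2 - 1 / n) * 4 ^ n)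
    (hk1 : 4 ^ k ≤ m) (hk2 : m < 4 ^ (k + 1)) : n = k := by
  have hm2 : m < 2 * 4 ^ n := A1_nat_ub hn h2
  by_contra hne
  rcases Nat.lt_or_ge n k with h | h
  · have h5 : 4 ^ (n+1) ≤ 4 ^ k := Nat.pow_le_pow_right (by norm_num) h
    have : (4:ℕ) ^ (n+1) = 4 * 4 ^ n := by ring
    omega
  · have hkn : k < n := by omega
    have h5 : 4 ^ (k+1) ≤ 4 ^ n := Nat.pow_le_pow_right (by norm_num) hkn
    omega

lemma A2_block {m n k : ℕ} (hn : 1 ≤ n) (h1 : (2 + 1 / n) * 4 ^ n ≤ (m:ℝ)) (h2 : m < 4 ^ (n + 1))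
    (hk1 : 4 ^ k ≤ m) (hk2 : m < 4 ^ (k + 1)) : n = k := by
  have hgt : 2 * 4 ^ n < m := A2_nat_lb hn h1
  by_contra hne
  rcases Nat.lt_or_ge n k with h | h
  · have h5 : 4 ^ (n+1) ≤ 4 ^ k := Nat.pow_le_pow_right (by norm_num) h
    omega
  · have hkn : k < n := by omega
    have h5 : 4 ^ (k+1) ≤ 4 ^ n := Nat.pow_le_pow_right (by norm_num) hkn
    have : (4:ℕ) ^ n ≤ 2 * 4 ^ n := by omega
    omega

-- membership in a block
lemma mem_Sfull_block {k m : ℕ} (hk : 1 ≤ k) (h1 : 4 ^ k ≤ m) (h2 : m < 4 ^ (k+1)) :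
    m ∈ Sfull ↔
      ((m : ℝ) < (2 - 1 / k) * 4 ^ k ∧ ¬ m % 4 = 0)
      ∨ ((2 + 1 / k) * 4 ^ k ≤ (m:ℝ) ∧ ¬ m % 4 = 2) := by
  rw [mem_Sfull_iff]
  constructor
  · rintro (⟨⟨n, hn, ha, hb⟩, hmod⟩ | ⟨⟨n, hn, ha, hb⟩, hmod⟩)
    · obtain rfl := A1_block hn ha hb h1 h2
      exact Or.inl ⟨hb, hmod⟩
    · obtain rfl := A2_block hn ha hb h1 h2
      exact Or.inr ⟨ha, hmod⟩
  · rintro (⟨ha, hb⟩ | ⟨ha, hb⟩)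
    · exact Or.inl ⟨⟨k, hk, h1, ha⟩, hb⟩
    · exact Or.inr ⟨⟨k, hk, ha, h2⟩, hb⟩


noncomputable def ue (k : ℕ) : ℕ := ⌈((2:ℝ) - 1/k) * 4 ^ k⌉₊
noncomputable def le' (k : ℕ) : ℕ := ⌈((2:ℝ) + 1/k) * 4 ^ k⌉₊

lemma ue_cast {k : ℕ} (hk : 1 ≤ k) :
    ((2:ℝ) - 1/k) * 4 ^ k ≤ (ue k : ℝ) ∧ (ue k : ℝ) < ((2:ℝ) - 1/k) * 4 ^ k + 1 := by
  have h0 : (0:ℝ) ≤ ((2:ℝ) - 1/k) * 4 ^ k := by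
    have h1 : (1:ℝ)/k ≤ 1 := by
      have : (1:ℝ) ≤ k := by exact_mod_cast hk
      rw [div_le_one (by linarith)]; linarith
    nlinarith [pow_pos (show (0:ℝ)<4 by norm_num) k]
  exact ⟨Nat.le_ceil _, Nat.ceil_lt_add_one h0⟩

lemma le'_cast {k : ℕ} (hk : 1 ≤ k) :
    ((2:ℝ) + 1/k) * 4 ^ k ≤ (le' k : ℝ) ∧ (le' k : ℝ) < ((2:ℝ) + 1/k) * 4 ^ k + 1 := by
  have h0 : (0:ℝ) ≤ ((2:ℝ) + 1/k) * 4 ^ k := by positivity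
  exact ⟨Nat.le_ceil _, Nat.ceil_lt_add_one h0⟩

lemma ue_le_le' {k : ℕ} (hk : 1 ≤ k) : ue k ≤ le' k := by
  apply Nat.ceil_le_ceil
  have := one_div_cast_pos hk
  nlinarith [pow_pos (show (0:ℝ)<4 by norm_num) k]

lemma pow_le_ue {k : ℕ} (hk : 1 ≤ k) : 4 ^ k ≤ ue k := by
  have h := (ue_cast hk).1
  have h1 : (1:ℝ)/k ≤ 1 := by
    have : (1:ℝ) ≤ k := by exact_mod_cast hk
    rw [div_le_one (by linarith)]; linarith
  have : ((4:ℝ)^k : ℝ) ≤ (ue k : ℝ) := by nlinarith [pow_pos (show (0:ℝ)<4 by norm_num) k]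
  exact_mod_cast this

lemma block_eq {k B : ℕ} (hk : 1 ≤ k) (hB2 : B ≤ 4 ^ (k+1)) :
    (Finset.Ico (4^k) B).filter (fun m => m ∈ Sfull)
      = ((Finset.Ico (4^k) (min B (ue k))).filter (fun m => ¬ m % 4 = 0))
        ∪ ((Finset.Ico (le' k) B).filter (fun m => ¬ m % 4 = 2)) := by
  have hul := ue_le_le' hk
  have hpu := pow_le_ue hk
  have hl2 : 2 * 4 ^ k < le' k := by
    have h := (le'_cast hk).1
    have := one_div_cast_pos hk
    have : ((2:ℝ) * 4 ^ k) < (le' k : ℝ) := by nlinarith [pow_pos (show (0:ℝ)<4 by norm_num) k]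
    exact_mod_cast this
  ext m
  simp only [Finset.mem_filter, Finset.mem_union, Finset.mem_Ico, lt_min_iff]
  constructor
  · rintro ⟨⟨h1, h2⟩, hS⟩
    rcases (mem_Sfull_block hk h1 (lt_of_lt_of_le h2 hB2)).1 hS with ⟨ha, hb⟩ | ⟨ha, hb⟩
    · exact Or.inl ⟨⟨h1, h2, Nat.lt_ceil.2 ha⟩, hb⟩
    · refine Or.inr ⟨⟨Nat.ceil_le.2 ha, h2⟩, hb⟩
  · rintro (⟨⟨h1, h2, h3⟩, hb⟩ | ⟨⟨h1, h2⟩, hb⟩)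
    · exact ⟨⟨h1, h2⟩, (mem_Sfull_block hk h1 (lt_of_lt_of_le h2 hB2)).2
        (Or.inl ⟨Nat.lt_ceil.1 h3, hb⟩)⟩
    · have hm1 : 4 ^ k ≤ m := by omega
      exact ⟨⟨hm1, h2⟩, (mem_Sfull_block hk hm1 (lt_of_lt_of_le h2 hB2)).2
        (Or.inr ⟨Nat.ceil_le.1 h1, hb⟩)⟩

lemma block_card {k B : ℕ} (hk : 1 ≤ k) (hB2 : B ≤ 4 ^ (k+1)) :
    ((Finset.Ico (4^k) B).filter (fun m => m ∈ Sfull)).card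
      = ((Finset.Ico (4^k) (min B (ue k))).filter (fun m => ¬ m % 4 = 0)).card
        + ((Finset.Ico (le' k) B).filter (fun m => ¬ m % 4 = 2)).card := by
  rw [block_eq hk hB2]
  apply Finset.card_union_of_disjoint
  apply Finset.disjoint_left.2
  intro m hm hm2
  simp only [Finset.mem_filter, Finset.mem_Ico, lt_min_iff] at hm hm2
  have := ue_le_le' hk
  omega

lemma block_bounds {k B : ℕ} (hk : 1 ≤ k) (hB1 : 4 ^ k ≤ B) (hB2 : B ≤ 4 ^ (k+1)) :
    (3:ℝ)/4 * ((B:ℝ) - 4^k) - (3/(2*(k:ℝ))) * 4^k - 8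
      ≤ (((Finset.Ico (4^k) B).filter (fun m => m ∈ Sfull)).card : ℝ)
    ∧ (((Finset.Ico (4^k) B).filter (fun m => m ∈ Sfull)).card : ℝ)
      ≤ (3:ℝ)/4 * ((B:ℝ) - 4^k) + 6 := by
  have hul := ue_le_le' hk
  have hpu := pow_le_ue hk
  have huc := ue_cast hk
  have hlc := le'_cast hk
  have hkR : (1:ℝ) ≤ k := by exact_mod_cast hk
  have h4pos : (0:ℝ) < 4 ^ k := pow_pos (by norm_num) k
  have hcard := block_card (B := B) hk hB2
  -- gap bound : (le' k : ℝ) - ue k ≤ 2/k * 4^k + 1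
  have hgap : (le' k : ℝ) - (ue k : ℝ) ≤ 2/(k:ℝ) * 4^k + 1 := by
    have h1 := huc.1
    have h2 := hlc.2
    have : ((2:ℝ)+1/k)*4^k - ((2:ℝ)-1/k)*4^k = 2/(k:ℝ) * 4^k := by ring
    linarith
  have hc1 := count_mod_ne (4^k) (min B (ue k)) 0 (by norm_num) (by omega)
  set c1 := ((Finset.Ico (4^k) (min B (ue k))).filter (fun m => ¬ m % 4 = 0)).card with hc1d
  set c2 := ((Finset.Ico (le' k) B).filter (fun m => ¬ m % 4 = 2)).card with hc2d
  have hminB : (min B (ue k) : ℝ) ≤ (B:ℝ) := by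
    have : min B (ue k) ≤ B := min_le_left _ _
    exact_mod_cast this
  have hminu : (min B (ue k) : ℝ) ≤ (ue k:ℝ) := by
    have : min B (ue k) ≤ ue k := min_le_right _ _
    exact_mod_cast this
  rcases Nat.lt_or_ge B (le' k) with hBl | hBl
  · -- B < le' : c2 = 0
    have hc2z : c2 = 0 := by
      rw [hc2d, Finset.Ico_eq_empty (by omega), Finset.filter_empty, Finset.card_empty]
    have hBlR : (B:ℝ) ≤ (le' k:ℝ) := by exact_mod_cast hBl.le
    constructor
    · -- lower
      rcases le_or_gt B (ue k) with hBu | hBu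
      · have hmin : min B (ue k) = B := min_eq_left hBu
        rw [hmin] at hc1
        push_cast at hc1
        rw [hcard, hc2z]
        push_cast
        have hk' : (0:ℝ) < 3/(2*(k:ℝ)) * 4^k := by positivity
        linarith [hc1.1]
      · have hmin : min B (ue k) = ue k := min_eq_right hBu.le
        rw [hmin] at hc1
        push_cast at hc1
        rw [hcard, hc2z]
        push_cast
        -- B - ue ≤ le' - ue ≤ 2/k 4^k + 1
        have : (B:ℝ) - (ue k:ℝ) ≤ 2/(k:ℝ) * 4^k + 1 := by linarith
        have h32 : (3:ℝ)/4 * (2/(k:ℝ) * 4^k) = 3/(2*(k:ℝ)) * 4^k := by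
          field_simp; ring
        linarith [hc1.1]
    · push_cast at hc1
      rw [hcard, hc2z]
      push_cast
      linarith [hc1.2]
  · -- le' ≤ B : min B (ue k) = ue k
    have hmin : min B (ue k) = ue k := min_eq_right (by omega)
    rw [hmin] at hc1
    have hc2 := count_mod_ne (le' k) B 2 (by norm_num) hBl
    rw [← hc2d] at hc2
    push_cast at hc1 hc2
    have hulR : (ue k:ℝ) ≤ (le' k:ℝ) := by exact_mod_cast hul
    have h32 : (3:ℝ)/4 * (2/(k:ℝ) * 4^k) = 3/(2*(k:ℝ)) * 4^k := by
      field_simp; ring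
    constructor
    · rw [hcard]; push_cast
      linarith [hc1.1, hc2.1]
    · rw [hcard]; push_cast
      linarith [hc1.2, hc2.2]


noncomputable def errE (M : ℕ) : ℝ := ∑ k ∈ Finset.Icc 1 M, ((3/(2*(k:ℝ))) * 4^k + 8)

lemma errE_zero : errE 0 = 0 := by simp [errE]

lemma errE_succ (M : ℕ) : errE (M+1) = errE M + ((3/(2*((M+1):ℝ))) * 4^(M+1) + 8) := by
  rw [errE, errE, Finset.sum_Icc_succ_top (by omega : 1 ≤ M + 1)]
  push_cast
  ring_nf

lemma errE_mono {M : ℕ} : errE M ≤ errE (M+1) := by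
  rw [errE_succ]
  have : (0:ℝ) ≤ (3/(2*((M+1):ℝ))) * 4^(M+1) + 8 := by positivity
  linarith

-- cumulative bounds
lemma cum_bounds (M : ℕ) : ∀ B : ℕ, 4 ≤ B → B ≤ 4^(M+1) →
    (3:ℝ)/4 * ((B:ℝ) - 4) - errE M ≤ (((Finset.Ico 4 B).filter (fun m => m ∈ Sfull)).card : ℝ)
    ∧ (((Finset.Ico 4 B).filter (fun m => m ∈ Sfull)).card : ℝ) ≤ (3:ℝ)/4 * ((B:ℝ) - 4) + 6*M := by
  induction M with
  | zero =>
    intro B hB1 hB2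
    norm_num at hB2
    have : B = 4 := le_antisymm hB2 hB1
    subst this
    simp [errE_zero]
  | succ M ih =>
    intro B hB1 hB2
    rcases le_or_gt B (4^(M+1)) with h | h
    · have := ih B hB1 h
      have h6 : (6:ℝ)*M ≤ 6*(M+1 : ℕ) := by push_cast; linarith
      have := errE_mono (M := M)
      constructor <;> [linarith [this, (ih B hB1 h).1]; linarith [(ih B hB1 h).2]]
    · have h41 : (4:ℕ) ≤ 4^(M+1) := by
        calc (4:ℕ) = 4^1 := by norm_num
        _ ≤ 4^(M+1) := Nat.pow_le_pow_right (by norm_num) (by omega)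
      have hsplit : Finset.Ico 4 B = Finset.Ico 4 (4^(M+1)) ∪ Finset.Ico (4^(M+1)) B :=
        (Finset.Ico_union_Ico_eq_Ico h41 h.le).symm
      have hdisj : Disjoint ((Finset.Ico 4 (4^(M+1))).filter (fun m => m ∈ Sfull))
          ((Finset.Ico (4^(M+1)) B).filter (fun m => m ∈ Sfull)) := by
        apply Finset.disjoint_left.2
        intro m hm hm2
        simp only [Finset.mem_filter, Finset.mem_Ico] at hm hm2
        omega
      have hcard : ((Finset.Ico 4 B).filter (fun m => m ∈ Sfull)).card
          = ((Finset.Ico 4 (4^(M+1))).filter (fun m => m ∈ Sfull)).card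
            + ((Finset.Ico (4^(M+1)) B).filter (fun m => m ∈ Sfull)).card := by
        rw [hsplit, Finset.filter_union, Finset.card_union_of_disjoint hdisj]
      have h1 := ih (4^(M+1)) h41 le_rfl
      have h2 := block_bounds (k := M+1) (B := B) (by omega) h.le hB2
      have hes := errE_succ M
      have hcast : ((4:ℕ)^(M+1) : ℝ) = (4:ℝ)^(M+1) := by push_cast; ring
      rw [hcard]
      push_cast
      push_cast [hcast] at h1 h2
      constructor
      · have := h1.1; have := h2.1
        rw [hes]
        push_cast
        linarith
      · have := h1.2; have := h2.2
        push_cast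
        linarith


lemma errE_one : errE 1 = 14 := by
  rw [errE]
  norm_num

lemma not_mem_Sfull_small {m : ℕ} (h : m < 4) : m ∉ Sfull := by
  rw [mem_Sfull_iff]
  rintro (⟨⟨n, hn, ha, hb⟩, -⟩ | ⟨⟨n, hn, ha, hb⟩, -⟩)
  · have : (4:ℕ)^1 ≤ 4^n := Nat.pow_le_pow_right (by norm_num) hn
    omega
  · have h1 := A2_nat_lb hn ha
    have : (4:ℕ)^1 ≤ 4^n := Nat.pow_le_pow_right (by norm_num) hn
    omega

lemma errE_le (M : ℕ) (hM : 1 ≤ M) : errE M ≤ (3/2) * (4^(M+1)/(M:ℝ)) + 8*M := by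
  induction M with
  | zero => omega
  | succ M ih =>
    rcases Nat.eq_or_lt_of_le hM with h | h
    · rw [← h]; norm_num [errE_one]
    · have hM1 : 1 ≤ M := by omega
      have hMR : (1:ℝ) ≤ M := by exact_mod_cast hM1
      have h4 : (0:ℝ) < 4^(M+1) := by positivity
      have hMpos : (0:ℝ) < M := by linarith
      have hM1pos : (0:ℝ) < (M:ℝ)+1 := by linarith
      have hP : (0:ℝ) < 4^(M+1) := by positivity
      have key : (3:ℝ)/2 * (4^(M+1)/M) + 3/(2*((M:ℝ)+1)) * 4^(M+1)
          ≤ (3:ℝ)/2 * (4^(M+2)/((M:ℝ)+1)) := by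
        set P : ℝ := 4^(M+1) with hPd
        have h42 : (4:ℝ)^(M+2) = 4 * P := by rw [hPd]; ring
        rw [h42]
        have e1 : 3/2 * (P/(M:ℝ)) + 3/(2*((M:ℝ)+1)) * P
            = (3*P*((M:ℝ)+1) + 3*P*M) / (2*(M:ℝ)*((M:ℝ)+1)) := by field_simp
        have e2 : 3/2*(4*P/((M:ℝ)+1)) = (12*P*(M:ℝ)) / (2*(M:ℝ)*((M:ℝ)+1)) := by
          field_simp; ring
        rw [e1, e2]
        gcongr
        nlinarith
      have := ih hM1
      rw [errE_succ]
      push_cast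
      linarith

lemma countIn_eq (N : ℕ) :
    countIn Sfull N = ((Finset.Ico 4 (N+1)).filter (fun m => m ∈ Sfull)).card := by
  unfold countIn
  congr 1
  ext m
  simp only [Finset.mem_filter, Finset.mem_Icc, Finset.mem_Ico]
  constructor
  · rintro ⟨⟨h1, h2⟩, h3⟩
    refine ⟨⟨?_, by omega⟩, h3⟩
    by_contra h
    exact not_mem_Sfull_small (by omega) h3
  · rintro ⟨⟨h1, h2⟩, h3⟩
    exact ⟨⟨by omega, by omega⟩, h3⟩

lemma log_facts (N : ℕ) (hN : 4 ≤ N) :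
    1 ≤ Nat.log 4 N ∧ 4 ^ (Nat.log 4 N) ≤ N ∧ N < 4 ^ (Nat.log 4 N + 1)
    ∧ (Nat.log 4 N)^2 ≤ N := by
  have h1 : 4 ^ (Nat.log 4 N) ≤ N := Nat.pow_log_le_self 4 (by omega)
  have h2 : N < 4 ^ (Nat.log 4 N + 1) := Nat.lt_pow_succ_log_self (by norm_num) N
  have h3 : 1 ≤ Nat.log 4 N := by
    rw [Nat.le_log_iff_pow_le (by norm_num) (by omega)]
    simpa using hN
  refine ⟨h3, h1, h2, ?_⟩
  calc (Nat.log 4 N)^2 ≤ (2^(Nat.log 4 N))^2 := by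
        exact Nat.pow_le_pow_left (Nat.lt_two_pow_self).le 2
  _ = 4^(Nat.log 4 N) := by rw [← pow_mul, pow_mul']; norm_num
  _ ≤ N := h1

lemma main_abs_bound (N : ℕ) (hN : 4 ≤ N) :
    |(countIn Sfull N : ℝ)/N - 3/4| ≤ 9/(4*(N:ℝ)) + 14/(Nat.log 4 N : ℝ) := by
  obtain ⟨hM1, hMl, hMu, hMsq⟩ := log_facts N hN
  set M := Nat.log 4 N with hMdef
  have hNR : (4:ℝ) ≤ N := by exact_mod_cast hN
  have hMR : (1:ℝ) ≤ M := by exact_mod_cast hM1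
  have hNpos : (0:ℝ) < N := by linarith
  have hB := cum_bounds M (N+1) (by omega) (by omega)
  rw [← countIn_eq] at hB
  have hEl := errE_le M hM1
  -- 4^(M+1) ≤ 4*N
  have h4N : ((4:ℝ))^(M+1) ≤ 4*N := by
    have : (4:ℕ)^(M+1) ≤ 4*N := by
      have : (4:ℕ)^(M+1) = 4 * 4^M := by ring
      omega
    exact_mod_cast this
  -- errE M ≤ 6N/M + 8M and 8M ≤ 8N/M  (since M^2 ≤ N)
  have hMsqR : ((M:ℝ))^2 ≤ N := by exact_mod_cast hMsq
  have hMpos : (0:ℝ) < M := by linarith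
  have hMN : (M:ℝ) ≤ (N:ℝ)/M := by
    rw [le_div_iff₀ hMpos]; nlinarith
  have hM8 : (8:ℝ)*M ≤ 8*((N:ℝ)/M) := by linarith
  have herr : errE M ≤ 14*((N:ℝ)/M) := by
    have h1 : (4:ℝ)^(M+1)/(M:ℝ) ≤ (4*(N:ℝ))/M := by gcongr
    have h2 : ((4:ℝ)*N)/M = 4*((N:ℝ)/M) := by ring
    rw [h2] at h1
    linarith
  have hup : (countIn Sfull N : ℝ) ≤ 3/4*(N:ℝ) + 6*((N:ℝ)/M) := by
    have h6 : (6:ℝ)*M ≤ 6*((N:ℝ)/M) := by linarith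
    have := hB.2
    push_cast at this
    linarith
  have hlo : 3/4*(N:ℝ) - 9/4 - 14*((N:ℝ)/M) ≤ (countIn Sfull N : ℝ) := by
    have := hB.1
    push_cast at this
    linarith
  have hupd : (countIn Sfull N : ℝ)/N ≤ 3/4 + 6/(M:ℝ) := by
    calc (countIn Sfull N : ℝ)/N ≤ (3/4*(N:ℝ) + 6*((N:ℝ)/M))/N := by gcongr
    _ = 3/4 + 6/(M:ℝ) := by field_simp
  have hlod : 3/4 - 9/(4*(N:ℝ)) - 14/(M:ℝ) ≤ (countIn Sfull N : ℝ)/N := by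
    calc (3:ℝ)/4 - 9/(4*(N:ℝ)) - 14/(M:ℝ)
        = (3/4*(N:ℝ) - 9/4 - 14*((N:ℝ)/M))/N := by field_simp
    _ ≤ (countIn Sfull N : ℝ)/N := by gcongr
  have hMinv : (0:ℝ) < 1/(M:ℝ) := by positivity
  have hNinv : (0:ℝ) ≤ 9/(4*(N:ℝ)) := by positivity
  rw [abs_le]
  constructor
  · have : (6:ℝ)/(M:ℝ) ≤ 14/(M:ℝ) := by
      gcongr <;> norm_num
    linarith
  · have : (6:ℝ)/(M:ℝ) ≤ 14/(M:ℝ) := by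
      gcongr <;> norm_num
    linarith

lemma log_tendsto : Tendsto (fun N => Nat.log 4 N) atTop atTop := by
  apply tendsto_atTop_atTop.2
  intro b
  refine ⟨4^b, fun a ha => ?_⟩
  calc b = Nat.log 4 (4^b) := (Nat.log_pow (by norm_num) b).symm
  _ ≤ Nat.log 4 a := Nat.log_mono_right ha

lemma density_Sfull : Tendsto (fun N => (countIn Sfull N : ℝ)/N) atTop (nhds (3/4)) := by
  rw [← tendsto_sub_nhds_zero_iff]
  apply squeeze_zero_norm' (a := fun N : ℕ => 9/(4*(N:ℝ)) + 14/(Nat.log 4 N : ℝ))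
  · filter_upwards [eventually_ge_atTop 4] with N hN
    rw [Real.norm_eq_abs]
    exact main_abs_bound N hN
  · have h1 : Tendsto (fun N : ℕ => 9/(4*(N:ℝ))) atTop (nhds 0) := by
      have := tendsto_const_div_atTop_nhds_zero_nat (9/4 : ℝ)
      apply this.congr
      intro N
      rw [div_div]
    have h2 : Tendsto (fun N : ℕ => 14/(Nat.log 4 N : ℝ)) atTop (nhds 0) :=
      (tendsto_const_div_atTop_nhds_zero_nat 14).comp log_tendsto
    simpa using h1.add h2


-- helper: m * 2^m and squares
lemma two_mul_pow_le (m : ℕ) (hm : 1 ≤ m) : 2 * m * 2 ^ m ≤ 4 ^ m := by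
  induction m with
  | zero => omega
  | succ m ih =>
    rcases Nat.eq_or_lt_of_le hm with h | h
    · simp [← h]
    · have hm1 : 1 ≤ m := by omega
      have := ih hm1
      have h4 : (4:ℕ)^(m+1) = 4 * 4^m := by ring
      have h2 : (2:ℕ)^(m+1) = 2 * 2^m := by ring
      have hmp : 2 ≤ 2^m := by
        calc (2:ℕ) = 2^1 := by norm_num
        _ ≤ 2^m := Nat.pow_le_pow_right (by norm_num) hm1
      nlinarith
lemma m_pow_le (m : ℕ) : m * 2 ^ m ≤ 4 ^ m := by
  have h1 : m ≤ 2 ^ m := Nat.le_of_lt (Nat.lt_two_pow_self (n := m))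
  calc m * 2^m ≤ 2^m * 2^m := Nat.mul_le_mul_right _ h1
  _ = 4^m := by rw [← Nat.mul_pow]
lemma four_pow_eq_sq (m : ℕ) : (4:ℕ)^m = 2^m * 2^m := by
  rw [← Nat.mul_pow]

theorem no_BB (B : Set ℕ) (hB : B.Infinite)
    (H : ∀ b₁ ∈ B, ∀ b₂ ∈ B, b₁ + b₂ ∈ Sfull) : False := by
  -- find a residue class with infinitely many elements
  have hres : ∃ r, r < 4 ∧ {b ∈ B | b % 4 = r}.Infinite := by
    by_contra h
    push_neg at h
    have hfin : ∀ r, r < 4 → {b ∈ B | b % 4 = r}.Finite := by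
      intro r hr
      rcases Set.finite_or_infinite {b ∈ B | b % 4 = r} with hf | hf
      · exact hf
      · exact absurd (h r hr) hf
    have : B ⊆ {b ∈ B | b % 4 = 0} ∪ {b ∈ B | b % 4 = 1} ∪ {b ∈ B | b % 4 = 2} ∪ {b ∈ B | b % 4 = 3} := by
      intro b hb
      simp only [Set.mem_union, Set.mem_setOf_eq]
      have : b % 4 = 0 ∨ b % 4 = 1 ∨ b % 4 = 2 ∨ b % 4 = 3 := by omega
      tauto
    exact hB (Set.Finite.subset ((((hfin 0 (by norm_num)).union (hfin 1 (by norm_num))).union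
      (hfin 2 (by norm_num))).union (hfin 3 (by norm_num))) this)
  obtain ⟨r, hr4, hinf⟩ := hres
  obtain ⟨b, hbB, hbr⟩ := hinf.nonempty
  obtain ⟨b', hb', hbb'⟩ := hinf.exists_gt (2*b*b + 4)
  obtain ⟨hb'B, hb'r⟩ := hb'
  -- 2 b' ∈ Sfull
  have h2b' := H b' hb'B b' hb'B
  have hsum := H b hbB b' hb'B
  rcases Nat.even_or_odd r with ⟨t, ht⟩ | ⟨t, ht⟩
  · -- even case
    have h2b'mod : (b' + b') % 4 = 0 := by omega
    have hsummod : (b + b') % 4 = 0 := by omega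
    -- 2b' in A2 part
    rw [mem_Sfull_iff] at h2b' hsum
    have h2b'A2 : ∃ n : ℕ, 1 ≤ n ∧ (2 + 1 / n) * 4 ^ n ≤ ((b' + b' : ℕ):ℝ) ∧ b' + b' < 4 ^ (n + 1) := by
      rcases h2b' with ⟨⟨n, hn, ha, hb2⟩, hmod⟩ | ⟨h, hmod⟩
      · omega
      · exact h
    obtain ⟨m, hm, hma, hmb⟩ := h2b'A2
    have hsumA2 : ∃ k : ℕ, 1 ≤ k ∧ (2 + 1 / k) * 4 ^ k ≤ ((b + b' : ℕ):ℝ) ∧ b + b' < 4 ^ (k + 1) := by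
      rcases hsum with ⟨h, hmod⟩ | ⟨h, hmod⟩
      · omega
      · exact h
    obtain ⟨k, hk, hka, hkb⟩ := hsumA2
    -- nat bounds
    have hm1 : 2 * 4 ^ m < b' + b' := A2_nat_lb hm hma
    have hk1 : 2 * 4 ^ k < b + b' := A2_nat_lb hk hka
    -- b' < 2 * 4^m
    have hb'ub : 2 * (b' + b') < 4 * 4 ^ (m+1) := by omega
    have hb'lt : b' < 2 * 4 ^ m := by
      have : (4:ℕ)^(m+1) = 4 * 4^m := by ring
      omega
    -- m * b < 4 ^ m   (since b * b < b'/2 ≤ 4^m ⇒ b < 2^m, m ≤ 2^m)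
    have hbsq : b * b < 4 ^ m := by
      have e : 2*b*b = 2*(b*b) := by ring
      rw [e] at hbb'
      omega
    have hb2m : b < 2 ^ m := by
      by_contra hcon
      push_neg at hcon
      have := Nat.mul_le_mul hcon hcon
      have := four_pow_eq_sq m
      omega
    have hmb4 : m * b < 4 ^ m ∨ b = 0 := by
      rcases Nat.eq_zero_or_pos b with h | h
      · right; exact h
      · left
        have h1 : m ≤ 2^m := (Nat.lt_two_pow_self (n := m)).le
        calc m * b < 2^m * 2^m := by
              apply Nat.mul_lt_mul_of_le_of_lt h1 hb2m (by positivity)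
        _ = 4^m := (four_pow_eq_sq m).symm
    have hmb4' : m * b < 4 ^ m := by
      rcases hmb4 with h | h
      · exact h
      · subst h
        simpa using Nat.pow_pos (show 0 < 4 by norm_num) m
    -- real bounds: sum < (2 + 1/m) * 4^m
    have hmR : (1:ℝ) ≤ m := by exact_mod_cast hm
    have h4mpos : (0:ℝ) < 4^m := by positivity
    have hsumR : ((b + b' : ℕ):ℝ) < (2 + 1/(m:ℝ)) * 4 ^ m := by
      have h1 : ((b':ℕ):ℝ) < 2 * 4^m := by exact_mod_cast hb'lt
      have h2 : ((b:ℕ):ℝ) * m < 4^m := by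
        exact_mod_cast (by rw [show b*m = m*b from by ring]; exact hmb4' : b * m < 4^m)
      have h3 : ((b:ℕ):ℝ) < 4^m / m := by
        rw [lt_div_iff₀ (by linarith)]; exact h2
      push_cast
      have : (2 + 1/(m:ℝ)) * 4^m = 2 * 4^m + 4^m/m := by field_simp
      rw [this]
      push_cast at h1 h3
      linarith
    -- sum > 4^m
    have hsumgt : 4 ^ m < b + b' := by omega
    -- case analysis on k
    rcases lt_trichotomy k m with h | h | h
    · -- k ≤ m - 1 : sum < 4^(k+1) ≤ 4^m < sum
      have : (4:ℕ)^(k+1) ≤ 4^m := Nat.pow_le_pow_right (by norm_num) (by omega)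
      omega
    · -- k = m : (2+1/m) 4^m ≤ sum < (2+1/m) 4^m
      subst h
      exact absurd (lt_of_le_of_lt hka hsumR) (lt_irrefl _)
    · -- k ≥ m+1 : sum > 2*4^k ≥ 2*4^(m+1) = 8*4^m but sum < 3*4^m
      have h8 : 2 * 4^(m+1) ≤ 2 * 4^k := by
        have := Nat.pow_le_pow_right (show 1 ≤ 4 by norm_num) (show m+1 ≤ k by omega)
        omega
      have : (4:ℕ)^(m+1) = 4 * 4^m := by ring
      have hsumlt3 : b + b' < 3 * 4^m := by
        have : ((b+b':ℕ):ℝ) < 3 * 4^m := by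
          have : (2 + 1/(m:ℝ)) * 4^m ≤ 3 * 4^m := by nlinarith
          linarith
        exact_mod_cast this
      omega
  · -- odd case
    have h2b'mod : (b' + b') % 4 = 2 := by omega
    have hsummod : (b + b') % 4 = 2 := by omega
    rw [mem_Sfull_iff] at h2b' hsum
    have h2b'A1 : ∃ n : ℕ, 1 ≤ n ∧ 4 ^ n ≤ b' + b' ∧ ((b' + b' : ℕ):ℝ) < (2 - 1/n) * 4 ^ n := by
      rcases h2b' with ⟨h, hmod⟩ | ⟨h, hmod⟩
      · exact h
      · omega
    obtain ⟨m, hm, hma, hmb⟩ := h2b'A1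
    have hsumA1 : ∃ k : ℕ, 1 ≤ k ∧ 4 ^ k ≤ b + b' ∧ ((b + b' : ℕ):ℝ) < (2 - 1/k) * 4 ^ k := by
      rcases hsum with ⟨h, hmod⟩ | ⟨h, hmod⟩
      · exact h
      · omega
    obtain ⟨k, hk, hka, hkb⟩ := hsumA1
    have hm1 : b' + b' < 2 * 4 ^ m := A1_nat_ub hm hmb
    have hk1 : b + b' < 2 * 4 ^ k := A1_nat_ub hk hkb
    -- b' < 4^m,  4^m ≤ 2 b'
    have hb'lt : b' < 4 ^ m := by omega
    have hb'ge : 4 ^ m ≤ b' + b' := hma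
    -- 2*m*b < 4^m
    have hbsq : b * b < 4 ^ m := by
      have e : 2*b*b = 2*(b*b) := by ring
      rw [e] at hbb'
      omega
    have hb2m : b < 2 ^ m := by
      by_contra hcon
      push_neg at hcon
      have := Nat.mul_le_mul hcon hcon
      have := four_pow_eq_sq m
      omega
    have h2mb : 2 * m * b ≤ 4 ^ m := by
      calc 2 * m * b ≤ 2 * m * 2^m := by
            have : b ≤ 2^m := hb2m.le
            exact Nat.mul_le_mul_left _ this
      _ ≤ 4^m := two_mul_pow_le m hm
    -- real: sum < 4^m
    have hmR : (1:ℝ) ≤ m := by exact_mod_cast hm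
    have h4mpos : (0:ℝ) < 4^m := by positivity
    have hsumR : ((b + b' : ℕ):ℝ) < (4:ℝ) ^ m := by
      have h1 : ((b'+b' : ℕ):ℝ) < (2 - 1/(m:ℝ)) * 4^m := hmb
      have h2 : ((b:ℕ):ℝ) * (2*m) ≤ 4^m := by
        exact_mod_cast (by rw [show b*(2*m) = 2*m*b from by ring]; exact h2mb : b * (2*m) ≤ 4^m)
      have h3 : ((b:ℕ):ℝ) ≤ 4^m / (2*m) := by
        rw [le_div_iff₀ (by linarith)]; exact h2
      push_cast at h1 h3 ⊢
      have key : (2 - 1/(m:ℝ)) * 4^m / 2 + 4^m/(2*m) = 4^m := by field_simp; ring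
      linarith
    have hsumlt : b + b' < 4 ^ m := by exact_mod_cast hsumR
    -- sum ≥ 2 * 4^(m-1) : 2*(b+b') ≥ 2*b' ≥ 4^m
    have hsumge : 4 ^ m ≤ 2 * (b + b') := by omega
    rcases lt_trichotomy k m with h | h | h
    · -- k ≤ m-1: 2*4^k ≤ 2*4^(m-1), and 4^m = 4*4^(m-1)
      have hk' : k + 1 ≤ m := by omega
      have h1 : (4:ℕ)^(k+1) ≤ 4^m := Nat.pow_le_pow_right (by norm_num) hk'
      have h2 : (4:ℕ)^(k+1) = 4 * 4^k := by ring
      -- 2*(b+b') ≥ 4^m ≥ 4*4^k  ⇒ b+b' ≥ 2*4^k, contradicting hk1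
      omega
    · subst h; omega
    · have h1 : (4:ℕ)^k ≥ 4^m := Nat.pow_le_pow_right (by norm_num) (by omega)
      omega

end Aux

theorem example_three_quarters_no_BB :
    hasDensity (({m : ℕ | ∃ n : ℕ, 1 ≤ n ∧ 4 ^ n ≤ m ∧ (m : ℝ) < (2 - 1 / n) * 4 ^ n}
          \ {m : ℕ | m % 4 = 0})
        ∪ ({m : ℕ | ∃ n : ℕ, 1 ≤ n ∧ (2 + 1 / n) * 4 ^ n ≤ (m : ℝ) ∧ m < 4 ^ (n + 1)}
          \ {m : ℕ | m % 4 = 2})) (3 / 4) ∧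
    ∀ B : Set ℕ, B.Infinite →
      ¬ (∀ b₁ ∈ B, ∀ b₂ ∈ B,
          b₁ + b₂ ∈
            ({m : ℕ | ∃ n : ℕ, 1 ≤ n ∧ 4 ^ n ≤ m ∧ (m : ℝ) < (2 - 1 / n) * 4 ^ n}
                \ {m : ℕ | m % 4 = 0})
              ∪ ({m : ℕ | ∃ n : ℕ, 1 ≤ n ∧ (2 + 1 / n) * 4 ^ n ≤ (m : ℝ) ∧ m < 4 ^ (n + 1)}
                \ {m : ℕ | m % 4 = 2})) := by 
  constructor
  · exact density_Sfull
  · intro B hB H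
    exact no_BB B hB H
end

section
/- Assume as hypothesis the base case n = 1: for every A ⊆ ℕ with d̄(A ∩ 2ℕ) > 1/3 there is an infinite B ⊆ ℕ with B + B ⊆ A. Then for every n ≥ 1, every 0 ≤ ℓ < 2^{n-1}, and every A ⊆ ℕ with d̄(A ∩ (2^n ℕ + 2ℓ)) > 1/(3·2^{n-1}), there exists an infinite set B ⊆ ℕ such that B + B ⊆ A. -/
open Filter
open scoped Classical

lemma countIn_nonneg_div (A : Set ℕ) (N : ℕ) : (0 : ℝ) ≤ (countIn A N : ℝ) / N :=
  div_nonneg (Nat.cast_nonneg _) (Nat.cast_nonneg _)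

lemma countIn_le (A : Set ℕ) (N : ℕ) : countIn A N ≤ N := by
  unfold countIn
  calc ((Finset.Icc 1 N).filter (fun n => n ∈ A)).card ≤ (Finset.Icc 1 N).card :=
        Finset.card_filter_le _ _
    _ = N := by rw [Nat.card_Icc]; omega

lemma countIn_div_le_one (A : Set ℕ) (N : ℕ) : (countIn A N : ℝ) / N ≤ 1 := by
  rcases Nat.eq_zero_or_pos N with h | h
  · simp [h]
  · rw [div_le_one (by exact_mod_cast h)]
    exact_mod_cast countIn_le A N

lemma countIn_mono (A : Set ℕ) {M N : ℕ} (h : M ≤ N) : countIn A M ≤ countIn A N :=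
  Finset.card_le_card (Finset.filter_subset_filter _ (Finset.Icc_subset_Icc_right h))

theorem BB_from_pow_two_progressions
    (hbase : ∀ A : Set ℕ, 1 / 3 < upperDensity (A ∩ {m : ℕ | m % 2 = 0}) →
      ∃ B : Set ℕ, B.Infinite ∧ ∀ b₁ ∈ B, ∀ b₂ ∈ B, b₁ + b₂ ∈ A) :
    ∀ n : ℕ, 1 ≤ n → ∀ ℓ : ℕ, ℓ < 2 ^ (n - 1) → ∀ A : Set ℕ,
      1 / (3 * 2 ^ (n - 1) : ℝ) <
        upperDensity (A ∩ {m : ℕ | ∃ k : ℕ, m = 2 ^ n * k + 2 * ℓ}) →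
      ∃ B : Set ℕ, B.Infinite ∧ ∀ b₁ ∈ B, ∀ b₂ ∈ B, b₁ + b₂ ∈ A := by
  intro n hn ℓ hℓ A hA
  set c : ℕ := 2 ^ (n - 1) with hc
  have hcpos : 0 < c := Nat.pow_pos (by norm_num)
  have hcR : (0:ℝ) < (c:ℝ) := by exact_mod_cast hcpos
  have h2n : 2 ^ n = c * 2 := by
    rw [hc, ← pow_succ]
    congr 1
    omega
  set S : Set ℕ := A ∩ {m : ℕ | ∃ k : ℕ, m = 2 ^ n * k + 2 * ℓ} with hSdef
  set A' : Set ℕ := {m : ℕ | c * m + 2 * ℓ ∈ A} with hA'def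
  -- counting lemma
  have hcount : ∀ N : ℕ, countIn S (c * N + 2 * ℓ) ≤ countIn (A' ∩ {m : ℕ | m % 2 = 0}) N + 1 := by
    intro N
    unfold countIn
    have hsub : @Finset.filter ℕ (fun n => n ∈ S) (fun a => Classical.propDecidable _)
          (Finset.Icc 1 (c * N + 2 * ℓ)) ⊆
        insert (2 * ℓ) (Finset.image (fun m => c * m + 2 * ℓ)
          (@Finset.filter ℕ (fun n => n ∈ A' ∩ {m : ℕ | m % 2 = 0})
            (fun a => Classical.propDecidable _) (Finset.Icc 1 N))) := by
      intro x hx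
      simp only [Finset.mem_filter, Finset.mem_Icc, hSdef, Set.mem_inter_iff,
        Set.mem_setOf_eq] at hx
      obtain ⟨⟨hx1, hx2⟩, hxA, k, hk⟩ := hx
      rcases Nat.eq_zero_or_pos k with hk0 | hkpos
      · subst hk0
        simp only [Finset.mem_insert]
        left
        omega
      · apply Finset.mem_insert_of_mem
        simp only [Finset.mem_image, Finset.mem_filter, Finset.mem_Icc, Set.mem_inter_iff,
          Set.mem_setOf_eq, hA'def]
        refine ⟨2 * k, ⟨⟨by omega, ?_⟩, ?_, by omega⟩, ?_⟩
        · have : c * (2 * k) ≤ c * N := by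
            have : 2 ^ n * k ≤ c * N := by omega
            calc c * (2 * k) = 2 ^ n * k := by rw [h2n]; ring
              _ ≤ c * N := this
          exact Nat.le_of_mul_le_mul_left this hcpos
        · have hx' : c * (2 * k) + 2 * ℓ = x := by rw [hk, h2n]; ring
          rw [hx']; exact hxA
        · rw [hk, h2n]; ring
    refine le_trans (Finset.card_le_card hsub) ?_
    exact le_trans (Finset.card_insert_le _ _) (Nat.add_le_add_right Finset.card_image_le 1)
  -- limsup argument
  set u : ℕ → ℝ := fun M => (countIn S M : ℝ) / M with hu
  set v : ℕ → ℝ := fun N => (countIn (A' ∩ {m : ℕ | m % 2 = 0}) N : ℝ) / N with hv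
  have hAu : 1 / (3 * (c:ℝ)) < limsup u atTop := by
    have hcast : ((c:ℕ):ℝ) = (2:ℝ) ^ (n-1) := by rw [hc]; push_cast; ring
    rw [hcast]
    exact hA
  have hucob : IsCoboundedUnder (· ≤ ·) atTop u :=
    isCoboundedUnder_le_of_le atTop (fun M => countIn_nonneg_div S M)
  have hubdd : IsBoundedUnder (· ≤ ·) atTop u :=
    isBoundedUnder_of ⟨1, fun M => countIn_div_le_one S M⟩
  have hvbdd : IsBoundedUnder (· ≤ ·) atTop v :=
    isBoundedUnder_of ⟨1, fun N => countIn_div_le_one _ N⟩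
  set L := limsup u atTop with hL
  set δ : ℝ := (1 / (3 * (c:ℝ)) + L) / 2 with hδ
  have hδ1 : 1 / (3 * (c:ℝ)) < δ := by rw [hδ]; linarith
  have hδ2 : δ < L := by rw [hδ]; linarith
  have hδpos : 0 < δ := lt_trans (by positivity) hδ1
  have hfreq : ∃ᶠ M in atTop, δ < u M := frequently_lt_of_lt_limsup hucob hδ2
  set θ : ℝ := (1/3 + (c:ℝ) * δ) / 2 with hθ
  have hcδ : 1/3 < (c:ℝ) * δ := by
    have : 1/3 = (c:ℝ) * (1 / (3 * (c:ℝ))) := by field_simp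
    rw [this]
    exact (mul_lt_mul_iff_right₀ hcR).2 hδ1
  have hθ1 : 1/3 < θ := by rw [hθ]; linarith
  have hθ2 : θ < (c:ℝ) * δ := by rw [hθ]; linarith
  have hθpos : 0 < θ := by linarith
  have hgap : 0 < δ - θ / c := by
    rw [sub_pos, div_lt_iff₀ hcR]
    linarith [hθ2]
  set M₀ : ℕ := ⌈(θ + 1) / (δ - θ / c)⌉₊ with hM₀
  -- frequently v ≥ θ
  have hfreqv : ∃ᶠ N in atTop, θ ≤ v N := by
    rw [frequently_atTop]
    intro N₀
    obtain ⟨M, hMge, hMδ⟩ := (frequently_atTop.1 hfreq) (max (c * N₀) (M₀ + 1))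
    have hMge1 : c * N₀ ≤ M := le_trans (le_max_left _ _) hMge
    have hMge2 : M₀ + 1 ≤ M := le_trans (le_max_right _ _) hMge
    have hM1 : 1 ≤ M := by omega
    have hMR : (0:ℝ) < (M:ℝ) := by exact_mod_cast hM1
    set N : ℕ := M / c + 1 with hN
    refine ⟨N, ?_, ?_⟩
    · have h : N₀ ≤ M / c := (Nat.le_div_iff_mul_le hcpos).2 (by rw [Nat.mul_comm]; exact hMge1)
      rw [hN]; exact le_trans h (Nat.le_succ _)
    · -- θ ≤ v N
      have hMle : M ≤ c * N := by
        have := Nat.div_add_mod M c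
        have hmod := Nat.mod_lt M hcpos
        calc M = c * (M / c) + M % c := (Nat.div_add_mod M c).symm
          _ ≤ c * (M / c) + c := by omega
          _ = c * N := by rw [hN]; ring
      have hcount2 : (countIn S M : ℝ) ≤ (countIn (A' ∩ {m : ℕ | m % 2 = 0}) N : ℝ) + 1 := by
        have h1 := countIn_mono S (show M ≤ c * N + 2 * ℓ by omega)
        have h2 := hcount N
        exact_mod_cast le_trans h1 h2
      have hδM : δ * M < (countIn S M : ℝ) := by
        have : δ < (countIn S M : ℝ) / M := hMδ
        exact (lt_div_iff₀ hMR).1 this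
      have hNR : (0:ℝ) < (N:ℝ) := by
        have : 1 ≤ N := hN ▸ Nat.le_add_left 1 (M / c)
        exact_mod_cast this
      have hNle : (N:ℝ) ≤ (M:ℝ) / c + 1 := by
        have h1 : ((M / c : ℕ) : ℝ) ≤ (M:ℝ) / (c:ℝ) := Nat.cast_div_le
        have : (N:ℝ) = ((M / c : ℕ) : ℝ) + 1 := by rw [hN]; push_cast; ring
        rw [this]; linarith
      -- M large: θ * (M/c + 1) ≤ δ * M - 1
      have hMbig : (θ + 1) / (δ - θ / c) ≤ (M:ℝ) := by
        have h1 : (M₀ : ℝ) ≤ (M:ℝ) := by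
          have : M₀ ≤ M := by omega
          exact_mod_cast this
        exact le_trans (Nat.le_ceil _) h1
      have hkey : θ * ((M:ℝ) / c + 1) ≤ δ * M - 1 := by
        have h1 : θ + 1 ≤ (M:ℝ) * (δ - θ / c) := by
          rw [div_le_iff₀ hgap] at hMbig
          linarith
        have h2 : θ * ((M:ℝ) / c) = (M:ℝ) * (θ / c) := by ring
        nlinarith [h1]
      show θ ≤ (countIn (A' ∩ {m : ℕ | m % 2 = 0}) N : ℝ) / N
      rw [le_div_iff₀ hNR]
      calc θ * N ≤ θ * ((M:ℝ) / c + 1) := by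
            exact mul_le_mul_of_nonneg_left hNle (le_of_lt hθpos)
        _ ≤ δ * M - 1 := hkey
        _ ≤ (countIn (A' ∩ {m : ℕ | m % 2 = 0}) N : ℝ) := by linarith
  have hdens : 1/3 < upperDensity (A' ∩ {m : ℕ | m % 2 = 0}) :=
    lt_of_lt_of_le hθ1 (le_limsup_of_frequently_le hfreqv hvbdd)
  obtain ⟨B, hBinf, hBsum⟩ := hbase A' hdens
  refine ⟨(fun b => c * b + ℓ) '' B, ?_, ?_⟩
  · apply hBinf.image
    have hinj : Function.Injective (fun b => c * b + ℓ) := by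
      intro a b h
      simp only at h
      exact Nat.eq_of_mul_eq_mul_left hcpos (by omega)
    exact hinj.injOn
  · rintro b₁ ⟨x, hx, rfl⟩ b₂ ⟨y, hy, rfl⟩
    have hxy : x + y ∈ A' := hBsum x hx y hy
    have : c * (x + y) + 2 * ℓ ∈ A := hxy
    have heq : c * x + ℓ + (c * y + ℓ) = c * (x + y) + 2 * ℓ := by ring
    rw [heq]
    exact this
end
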